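/- Replacement distance query decomposition (Bernstein–Karger correctness): let e = (u,v) lie on a shortest x-y path, and let c_x and c_y be vertices on this path with c_x before u and v before c_y, such that c_x lies on the path (so d(x,y,·) subpaths compose). If the replacement path R for (x,y,e) diverges from the original path after c_x or re-merges before c_y, then d(x,y,e) = min( d(x,c_x) + d(c_x,y,e), d(x,c_y,e) + d(c_y,y) ); in general, d(x,y,e) = min( d(x,c_x) + d(c_x,y,e), d(x,c_y,e) + d(c_y,y), D ) where D is the minimum weight of an x-y path avoiding the entire subpath of the original shortest path from c_x to c_y. -/

import Mathlib

open scoped ENNReal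

variable {V : Type*}

/-- `p` is a walk/path from `u` to `v` using edges of `E`, given as its list of vertices. -/
def IsPath (E : Set (V × V)) (u v : V) (p : List V) : Prop :=
  p.head? = some u ∧ p.getLast? = some v ∧ List.Chain' (fun a b => (a, b) ∈ E) p

/-- The list of (directed) edges traversed by a path `p`. -/
def edgesOf (p : List V) : List (V × V) := p.zip p.tail

/-- Total weight of a path. -/
noncomputable def pweight (w : V × V → ℝ≥0∞) (p : List V) : ℝ≥0∞ := ((edgesOf p).map w).sum

/-- Number of edges (hops) of a path. -/
def hops (p : List V) : ℕ := p.length - 1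

/-- Shortest-path distance from `u` to `v`. -/
noncomputable def gdist (E : Set (V × V)) (w : V × V → ℝ≥0∞) (u v : V) : ℝ≥0∞ :=
  sInf {c | ∃ p, IsPath E u v p ∧ pweight w p = c}

/-- Replacement distance: shortest-path distance from `u` to `v` avoiding edge `e`. -/
noncomputable def dRepl (E : Set (V × V)) (w : V × V → ℝ≥0∞) (u v : V) (e : V × V) : ℝ≥0∞ :=
  sInf {c | ∃ p, IsPath E u v p ∧ e ∉ edgesOf p ∧ pweight w p = c}

/-- `h`-hop-limited replacement distance from `u` to `v` avoiding edge `e`. -/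
noncomputable def dh (E : Set (V × V)) (w : V × V → ℝ≥0∞) (h : ℕ) (u v : V) (e : V × V) :
    ℝ≥0∞ :=
  sInf {c | ∃ p, IsPath E u v p ∧ hops p ≤ h ∧ e ∉ edgesOf p ∧ pweight w p = c}

lemma edgesOf_cons₂ (a b : V) (l : List V) : edgesOf (a :: b :: l) = (a,b) :: edgesOf (b :: l) := rfl

lemma edgesOf_singleton (a : V) : edgesOf [a] = [] := rfl

lemma edgesOf_split (s : List V) (b : V) (t : List V) :
    edgesOf (s ++ b :: t) = edgesOf (s ++ [b]) ++ edgesOf (b :: t) := by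
  induction s with
  | nil => simp [edgesOf]
  | cons a s ih =>
    cases s with
    | nil => simp [edgesOf_cons₂, edgesOf]
    | cons a' s' =>
      simp only [List.cons_append, edgesOf_cons₂]
      rw [← List.cons_append, ih]
      simp

lemma pweight_split (w : V × V → ℝ≥0∞) (s : List V) (b : V) (t : List V) :
    pweight w (s ++ b :: t) = pweight w (s ++ [b]) + pweight w (b :: t) := by
  rw [pweight, edgesOf_split, List.map_append, List.sum_append]; rfl

lemma mem_of_mem_edgesOf {f : V × V} {p : List V} (h : f ∈ edgesOf p) : f.1 ∈ p := by
  induction p with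
  | nil => simp [edgesOf] at h
  | cons a l ih =>
    cases l with
    | nil => simp [edgesOf] at h
    | cons b l' =>
      rw [edgesOf_cons₂] at h
      rcases List.mem_cons.1 h with h | h
      · subst h; simp
      · exact List.mem_cons_of_mem _ (ih h)

lemma nodup_edgesOf {p : List V} (h : p.Nodup) : (edgesOf p).Nodup := by
  induction p with
  | nil => simp [edgesOf]
  | cons a l ih =>
    cases l with
    | nil => simp [edgesOf]
    | cons b l' =>
      rw [edgesOf_cons₂]
      refine List.Nodup.cons ?_ (ih h.of_cons)
      intro hmem
      exact h.notMem (mem_of_mem_edgesOf hmem)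

lemma mem_edgesOf_cons {f : V × V} {a : V} {l : List V} (h : f ∈ edgesOf l) :
    f ∈ edgesOf (a :: l) := by
  cases l with
  | nil => simp [edgesOf] at h
  | cons b l' => rw [edgesOf_cons₂]; exact List.mem_cons_of_mem _ h

lemma mem_edgesOf_iff {f : V × V} {p : List V} :
    f ∈ edgesOf p ↔ ∃ s t, p = s ++ f.1 :: f.2 :: t := by
  constructor
  · intro h
    induction p with
    | nil => simp [edgesOf] at h
    | cons a l ih =>
      cases l with
      | nil => simp [edgesOf] at h
      | cons b l' =>
        rw [edgesOf_cons₂] at h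
        rcases List.mem_cons.1 h with h | h
        · subst h; exact ⟨[], l', rfl⟩
        · obtain ⟨s, t, hst⟩ := ih h
          exact ⟨a :: s, t, by simp [hst]⟩
  · rintro ⟨s, t, rfl⟩
    induction s with
    | nil => rw [List.nil_append, edgesOf_cons₂]; simp
    | cons a s' ih => exact mem_edgesOf_cons ih

lemma head?_append_cons (s : List V) (b : V) (t t' : List V) :
    (s ++ b :: t).head? = (s ++ b :: t').head? := by cases s <;> rfl

lemma isPath_split {E : Set (V × V)} {x y b : V} {s t : List V}
    (h : IsPath E x y (s ++ b :: t)) :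
    IsPath E x b (s ++ [b]) ∧ IsPath E b y (b :: t) := by
  obtain ⟨h1, h2, h3⟩ := h
  unfold List.Chain' at h3
  rw [List.isChain_append] at h3
  obtain ⟨hs, hbt, hlink⟩ := h3
  refine ⟨⟨?_, ?_, ?_⟩, ?_, ?_, hbt⟩
  · rw [← h1]; exact (head?_append_cons s b [] t).symm ▸ rfl
  · rw [List.getLast?_append_cons]; rfl
  · refine List.IsChain.append hs (List.isChain_singleton b) ?_
    intro p hp q hq
    simp only [List.head?_cons, Option.mem_def, Option.some.injEq] at hq
    subst hq
    exact hlink p hp b rfl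
  · rfl
  · rw [← h2, List.getLast?_append_cons]

lemma isPath_glue {E : Set (V × V)} {x y b : V} {s t : List V}
    (hp : IsPath E x b (s ++ [b])) (hq : IsPath E b y (b :: t)) :
    IsPath E x y (s ++ b :: t) := by
  obtain ⟨h1, h2, h3⟩ := hp
  obtain ⟨q1, q2, q3⟩ := hq
  unfold List.Chain' at h3
  rw [List.isChain_append] at h3
  obtain ⟨hs, _, hlink⟩ := h3
  refine ⟨?_, ?_, ?_⟩
  · rw [← h1]; exact head?_append_cons s b t []
  · rw [List.getLast?_append_cons]; exact q2
  · refine List.IsChain.append hs q3 ?_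
    intro p hp' q hq'
    simp only [List.head?_cons, Option.mem_def, Option.some.injEq] at hq'
    subst hq'
    exact hlink p hp' b rfl

lemma glue_paths {E : Set (V × V)} (w : V × V → ℝ≥0∞) {x y b : V} {p q : List V}
    (hp : IsPath E x b p) (hq : IsPath E b y q) :
    ∃ r, IsPath E x y r ∧ pweight w r = pweight w p + pweight w q ∧
      ∀ f, f ∈ edgesOf r → f ∈ edgesOf p ∨ f ∈ edgesOf q := by
  have hpb : p.dropLast ++ [b] = p := List.dropLast_append_getLast? b hp.2.1
  have hq' : q = b :: q.tail := by
    cases q with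
    | nil => simp [IsPath] at hq
    | cons a q' =>
      obtain ⟨h1, _, _⟩ := hq
      simp only [List.head?_cons, Option.some.injEq] at h1
      rw [h1]; rfl
  refine ⟨p.dropLast ++ b :: q.tail, ?_, ?_, ?_⟩
  · exact isPath_glue (by rw [hpb]; exact hp) (by rw [← hq']; exact hq)
  · rw [pweight_split, hpb, ← hq']
  · intro f hf
    rw [edgesOf_split] at hf
    rcases List.mem_append.1 hf with hf | hf
    · exact Or.inl (by rw [← hpb]; exact hf)
    · exact Or.inr (by rw [hq']; exact hf)

lemma gdist_le {E : Set (V × V)} {w : V × V → ℝ≥0∞} {u v : V} {p : List V}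
    (h : IsPath E u v p) : gdist E w u v ≤ pweight w p :=
  sInf_le ⟨p, h, rfl⟩

lemma dRepl_le {E : Set (V × V)} {w : V × V → ℝ≥0∞} {u v : V} {e : V × V} {p : List V}
    (h : IsPath E u v p) (he : e ∉ edgesOf p) : dRepl E w u v e ≤ pweight w p :=
  sInf_le ⟨p, h, he, rfl⟩

lemma le_add_sInf' {T a : ℝ≥0∞} {B : Set ℝ≥0∞} (h : ∀ b ∈ B, T ≤ a + b) :
    T ≤ a + sInf B := by
  rw [add_comm, ENNReal.sInf_add]
  exact le_iInf₂ fun b hb => by rw [add_comm]; exact h b hb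

lemma le_sInf_add' {T c : ℝ≥0∞} {A : Set ℝ≥0∞} (h : ∀ a ∈ A, T ≤ a + c) :
    T ≤ sInf A + c := by
  rw [ENNReal.sInf_add]
  exact le_iInf₂ h

lemma prefix_shortest {E : Set (V × V)} {w : V × V → ℝ≥0∞} {x y b : V} {s t q : List V}
    (hP : IsPath E x y (s ++ b :: t)) (hw : pweight w (s ++ b :: t) = gdist E w x y)
    (hfin : gdist E w x y ≠ ⊤) (hq : IsPath E x b q) :
    pweight w (s ++ [b]) ≤ pweight w q := by
  have hbt : IsPath E b y (b :: t) := (isPath_split hP).2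
  obtain ⟨r, hr, hwr, _⟩ := glue_paths w hq hbt
  have h1 : pweight w (s ++ [b]) + pweight w (b :: t) ≤ pweight w q + pweight w (b :: t) := by
    rw [← pweight_split, hw]
    exact hwr ▸ gdist_le hr
  have hne : pweight w (b :: t) ≠ ⊤ := by
    intro htop
    apply hfin
    rw [← hw, pweight_split, htop, add_top]
  exact (ENNReal.add_le_add_iff_right hne).1 h1

lemma suffix_shortest {E : Set (V × V)} {w : V × V → ℝ≥0∞} {x y b : V} {s t q : List V}
    (hP : IsPath E x y (s ++ b :: t)) (hw : pweight w (s ++ b :: t) = gdist E w x y)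
    (hfin : gdist E w x y ≠ ⊤) (hq : IsPath E b y q) :
    pweight w (b :: t) ≤ pweight w q := by
  have hsb : IsPath E x b (s ++ [b]) := (isPath_split hP).1
  obtain ⟨r, hr, hwr, _⟩ := glue_paths w hsb hq
  have h1 : pweight w (s ++ [b]) + pweight w (b :: t) ≤ pweight w (s ++ [b]) + pweight w q := by
    rw [← pweight_split, hw]
    exact hwr ▸ gdist_le hr
  have hne : pweight w (s ++ [b]) ≠ ⊤ := by
    intro htop
    apply hfin
    rw [← hw, pweight_split, htop, top_add]
  exact (ENNReal.add_le_add_iff_left hne).1 h1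

lemma gdist_ge {E : Set (V × V)} {w : V × V → ℝ≥0∞} {u v : V} {T : ℝ≥0∞}
    (h : ∀ q, IsPath E u v q → T ≤ pweight w q) : T ≤ gdist E w u v :=
  le_sInf (by rintro c ⟨q, hq, rfl⟩; exact h q hq)

lemma le_add_dRepl {E : Set (V × V)} {w : V × V → ℝ≥0∞} {T a : ℝ≥0∞} {u v : V} {e : V × V}
    (h : ∀ r, IsPath E u v r → e ∉ edgesOf r → T ≤ a + pweight w r) :
    T ≤ a + dRepl E w u v e :=
  le_add_sInf' (by rintro b ⟨r, hr, her, rfl⟩; exact h r hr her)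

lemma le_dRepl_add {E : Set (V × V)} {w : V × V → ℝ≥0∞} {T c : ℝ≥0∞} {u v : V} {e : V × V}
    (h : ∀ r, IsPath E u v r → e ∉ edgesOf r → T ≤ pweight w r + c) :
    T ≤ dRepl E w u v e + c :=
  le_sInf_add' (by rintro b ⟨r, hr, her, rfl⟩; exact h r hr her)

lemma le_gdist_add {E : Set (V × V)} {w : V × V → ℝ≥0∞} {T c : ℝ≥0∞} {u v : V}
    (h : ∀ q, IsPath E u v q → T ≤ pweight w q + c) : T ≤ gdist E w u v + c :=
  le_sInf_add' (by rintro b ⟨q, hq, rfl⟩; exact h q hq)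

lemma le_add_gdist {E : Set (V × V)} {w : V × V → ℝ≥0∞} {T a : ℝ≥0∞} {u v : V}
    (h : ∀ q, IsPath E u v q → T ≤ a + pweight w q) : T ≤ a + gdist E w u v :=
  le_add_sInf' (by rintro b ⟨q, hq, rfl⟩; exact h q hq)


/-- Bernstein–Karger query decomposition. Let `P` be a shortest (simple) `x`-`y`
path, decomposed as `P = pre ++ mid ++ post` where `mid` goes from `c_x` to `c_y` and contains
the edge `e` (so `c_x` is weakly before `e` and `c_y` weakly after it). Then
`d(x,y,e) = min(d(x,c_x) + d(c_x,y,e), d(x,c_y,e) + d(c_y,y), D)` where `D` is the minimum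
weight of an `x`-`y` path avoiding every edge of the `c_x`-`c_y` subpath `mid`. -/
theorem stmt18 (E : Set (V × V)) (w : V × V → ℝ≥0∞) (x y cx cy : V) (e : V × V)
    (P pre mid post : List V)
    (hP : IsPath E x y P) (hnodup : P.Nodup) (hshort : pweight w P = gdist E w x y)
    (hdecomp : P = pre ++ mid ++ post)
    (hhead : mid.head? = some cx) (hlast : mid.getLast? = some cy)
    (he : e ∈ edgesOf mid) :
    dRepl E w x y e =
      min (gdist E w x cx + dRepl E w cx y e)
        (min (dRepl E w x cy e + gdist E w cy y)
          (sInf {c | ∃ Q, IsPath E x y Q ∧ (∀ f ∈ edgesOf mid, f ∉ edgesOf Q) ∧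
            pweight w Q = c})) := by
  -- basic decompositions
  obtain ⟨mt, hmt⟩ : ∃ mt, mid = cx :: mt := by
    cases mid with
    | nil => simp at hhead
    | cons a l => exact ⟨l, by simpa using congrArg (List.cons · l) (by simpa using hhead)⟩
  obtain ⟨md, hmd⟩ : ∃ md, mid = md ++ [cy] :=
    ⟨mid.dropLast, (List.dropLast_append_getLast? cy hlast).symm⟩
  have hPsplit1 : P = pre ++ cx :: (mt ++ post) := by rw [hdecomp, hmt]; simp
  have hP1 : IsPath E x y (pre ++ cx :: (mt ++ post)) := by rw [← hPsplit1]; exact hP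
  have hP1x : IsPath E x cx (pre ++ [cx]) := (isPath_split hP1).1
  have hPmp : IsPath E cx y (mid ++ post) := by
    have := (isPath_split hP1).2
    rwa [hmt, List.cons_append]
  have hPmp' : IsPath E cx y (md ++ cy :: post) := by
    rw [hmd] at hPmp; rwa [List.append_assoc, List.singleton_append] at hPmp
  have hPmid : IsPath E cx cy mid := by
    have := (isPath_split hPmp').1; rwa [← hmd] at this
  have hP4 : IsPath E cy y (cy :: post) := (isPath_split hPmp').2
  have hPsplit2 : P = (pre ++ md) ++ cy :: post := by rw [hdecomp, hmd]; simp
  have hEP : (edgesOf P).Nodup := nodup_edgesOf hnodup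
  -- e is in the "middle+post" part and in the "pre+mid" part
  have hemp : e ∈ edgesOf (cx :: (mt ++ post)) := by
    have h1 : e ∈ edgesOf (mid ++ post) := by
      rw [hmd, List.append_assoc, List.singleton_append, edgesOf_split, ← hmd]
      exact List.mem_append_left _ he
    rwa [hmt, List.cons_append] at h1
  have hepm : e ∈ edgesOf (pre ++ md ++ [cy]) := by
    have h1 : e ∈ edgesOf (pre ++ mid) := by
      rw [hmt, edgesOf_split, ← hmt]
      exact List.mem_append_right _ he
    rwa [hmd, ← List.append_assoc] at h1
  have he_not_P1 : e ∉ edgesOf (pre ++ [cx]) := by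
    intro hmem
    have hd := List.disjoint_of_nodup_append (l₁ := edgesOf (pre ++ [cx]))
      (l₂ := edgesOf (cx :: (mt ++ post))) (by rw [← edgesOf_split, ← hPsplit1]; exact hEP)
    exact hd hmem hemp
  have he_not_P4 : e ∉ edgesOf (cy :: post) := by
    intro hmem
    have hd := List.disjoint_of_nodup_append (l₁ := edgesOf (pre ++ md ++ [cy]))
      (l₂ := edgesOf (cy :: post))
      (by rw [← edgesOf_split, ← hPsplit2]; exact hEP)
    exact hd hepm hmem
  have hmidnodup : (edgesOf mid).Nodup := by
    rw [hdecomp] at hnodup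
    exact nodup_edgesOf (hnodup.of_append_left.of_append_right)
  apply le_antisymm
  · -- easy direction: dRepl ≤ min of the three
    refine le_min ?_ (le_min ?_ ?_)
    · -- term 1
      by_cases htop : gdist E w x cx + dRepl E w cx y e = ⊤
      · rw [htop]; exact le_top
      have hgfin : gdist E w x y ≠ ⊤ := by
        refine ne_top_of_le_ne_top htop ?_
        apply le_sInf_add'
        rintro a ⟨p, hp, rfl⟩
        apply le_add_dRepl
        intro r hr _
        obtain ⟨W, hW, hWw, _⟩ := glue_paths w hp hr
        exact hWw ▸ gdist_le hW
      have hpre_short : pweight w (pre ++ [cx]) ≤ gdist E w x cx := by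
        apply gdist_ge
        intro q hq
        exact prefix_shortest (by rw [← hPsplit1]; exact hP)
          (by rw [← hPsplit1]; exact hshort) hgfin hq
      apply le_add_dRepl
      intro r hr her
      obtain ⟨W, hW, hWw, hWsub⟩ := glue_paths w hP1x hr
      have heW : e ∉ edgesOf W := by
        intro hmem
        rcases hWsub e hmem with h | h
        · exact he_not_P1 h
        · exact her h
      calc dRepl E w x y e ≤ pweight w W := dRepl_le hW heW
        _ = pweight w (pre ++ [cx]) + pweight w r := hWw
        _ ≤ gdist E w x cx + pweight w r := add_le_add_left hpre_short _
    · -- term 2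
      by_cases htop : dRepl E w x cy e + gdist E w cy y = ⊤
      · rw [htop]; exact le_top
      have hgfin : gdist E w x y ≠ ⊤ := by
        refine ne_top_of_le_ne_top htop ?_
        apply le_dRepl_add
        intro r hr _
        apply le_add_gdist
        intro q hq
        obtain ⟨W, hW, hWw, _⟩ := glue_paths w hr hq
        exact hWw ▸ gdist_le hW
      have hpost_short : pweight w (cy :: post) ≤ gdist E w cy y := by
        apply gdist_ge
        intro q hq
        exact suffix_shortest (by rw [← hPsplit2]; exact hP)
          (by rw [← hPsplit2]; exact hshort) hgfin hq
      apply le_dRepl_add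
      intro r hr her
      obtain ⟨W, hW, hWw, hWsub⟩ := glue_paths w hr hP4
      have heW : e ∉ edgesOf W := by
        intro hmem
        rcases hWsub e hmem with h | h
        · exact her h
        · exact he_not_P4 h
      calc dRepl E w x y e ≤ pweight w W := dRepl_le hW heW
        _ = pweight w r + pweight w (cy :: post) := hWw
        _ ≤ pweight w r + gdist E w cy y := add_le_add_right hpost_short _
    · -- term 3
      apply sInf_le_sInf
      rintro c ⟨Q, hQ, hQall, rfl⟩
      exact ⟨Q, hQ, hQall e he, rfl⟩
  · -- hard direction
    apply le_sInf
    rintro c ⟨R, hR, heR, rfl⟩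
    by_cases hRtop : pweight w R = ⊤
    · rw [hRtop]; exact le_top
    have hgfin : gdist E w x y ≠ ⊤ := ne_top_of_le_ne_top hRtop (gdist_le hR)
    by_cases hmidR : ∀ f ∈ edgesOf mid, f ∉ edgesOf R
    · exact le_trans (min_le_right _ _)
        (le_trans (min_le_right _ _) (sInf_le ⟨R, hR, hmidR, rfl⟩))
    push_neg at hmidR
    obtain ⟨f, hfmid, hfR⟩ := hmidR
    have hfe : f ≠ e := fun h => heR (h ▸ hfR)
    obtain ⟨m1, m2, hm⟩ := mem_edgesOf_iff.1 he
    have hsplitmid : edgesOf mid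
        = edgesOf (m1 ++ [e.1]) ++ ((e.1, e.2) :: edgesOf (e.2 :: m2)) := by
      rw [hm, edgesOf_split, edgesOf_cons₂]
    rw [hsplitmid] at hfmid
    rcases List.mem_append.1 hfmid with hf1 | hf2
    · -- f is strictly before e: bound via term 1
      obtain ⟨s1, t1, hst⟩ := mem_edgesOf_iff.1 hf1
      have hmid2 : mid = (s1 ++ [f.1]) ++ f.2 :: (t1 ++ e.2 :: m2) := by
        rw [hm]
        have h := congrArg (fun l => l ++ e.2 :: m2) hst
        simp only [List.append_assoc, List.cons_append, List.singleton_append,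
          List.nil_append] at h ⊢
        exact h
      obtain ⟨r1, r2, hrr⟩ := mem_edgesOf_iff.1 hfR
      have hR2 : R = (r1 ++ [f.1]) ++ f.2 :: r2 := by rw [hrr]; simp
      have hmidb : IsPath E cx f.2 ((s1 ++ [f.1]) ++ [f.2]) :=
        (isPath_split (show IsPath E cx cy ((s1 ++ [f.1]) ++ f.2 :: (t1 ++ e.2 :: m2)) by
          rw [← hmid2]; exact hPmid)).1
      have hRsplit := isPath_split (show IsPath E x y ((r1 ++ [f.1]) ++ f.2 :: r2) by
        rw [← hR2]; exact hR)
      have hlast1 : (f.2 :: t1).getLast? = some e.1 := by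
        have h1 : (m1 ++ [e.1]).getLast? = some e.1 := by simp
        rw [hst, List.getLast?_append_cons, List.getLast?_cons_cons] at h1
        exact h1
      have hbt : (f.2 :: t1).dropLast ++ [e.1] = f.2 :: t1 :=
        List.dropLast_append_getLast? _ hlast1
      have hein2 : e ∈ edgesOf (f.2 :: (t1 ++ e.2 :: m2)) := by
        apply mem_edgesOf_iff.2
        refine ⟨(f.2 :: t1).dropLast, m2, ?_⟩
        rw [show f.2 :: (t1 ++ e.2 :: m2) = (f.2 :: t1) ++ e.2 :: m2 from rfl, ← hbt]
        simp
      have henot1 : e ∉ edgesOf ((s1 ++ [f.1]) ++ [f.2]) := by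
        intro hmem
        have hd := List.disjoint_of_nodup_append
          (by rw [← edgesOf_split, ← hmid2]; exact hmidnodup)
        exact hd hmem hein2
      have henot2 : e ∉ edgesOf (f.2 :: r2) := by
        intro hmem
        apply heR
        rw [hR2, edgesOf_split]
        exact List.mem_append_right _ hmem
      obtain ⟨W, hW, hWw, hWsub⟩ := glue_paths w hmidb hRsplit.2
      have heW : e ∉ edgesOf W := by
        intro hmem
        rcases hWsub e hmem with h | h
        · exact henot1 h
        · exact henot2 h
      obtain ⟨S', hS'⟩ : ∃ S', s1 ++ [f.1] = cx :: S' := by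
        cases hq : s1 ++ [f.1] with
        | nil => simp at hq
        | cons a Z =>
          refine ⟨Z, ?_⟩
          have hh2 := hhead
          rw [hmid2, hq] at hh2
          simp only [List.cons_append, List.head?_cons, Option.some.injEq] at hh2
          rw [hh2]
      have hPsplitb : P = (pre ++ (s1 ++ [f.1])) ++ f.2 :: ((t1 ++ e.2 :: m2) ++ post) := by
        rw [hdecomp, hmid2]; simp
      have hq2 : pweight w ((pre ++ (s1 ++ [f.1])) ++ [f.2])
          = pweight w (pre ++ [cx]) + pweight w ((s1 ++ [f.1]) ++ [f.2]) := by
        rw [hS', show (pre ++ (cx :: S')) ++ [f.2] = pre ++ cx :: (S' ++ [f.2]) by simp,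
          pweight_split, List.cons_append]
      have hprefix_le : pweight w ((pre ++ (s1 ++ [f.1])) ++ [f.2])
          ≤ pweight w ((r1 ++ [f.1]) ++ [f.2]) :=
        prefix_shortest (by rw [← hPsplitb]; exact hP) (by rw [← hPsplitb]; exact hshort)
          hgfin hRsplit.1
      refine le_trans (min_le_left _ _) ?_
      have h1 : gdist E w x cx + dRepl E w cx y e
          ≤ pweight w (pre ++ [cx]) + pweight w W :=
        add_le_add (gdist_le hP1x) (dRepl_le hW heW)
      rw [hWw] at h1
      calc gdist E w x cx + dRepl E w cx y e
          ≤ pweight w (pre ++ [cx]) + (pweight w ((s1 ++ [f.1]) ++ [f.2])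
              + pweight w (f.2 :: r2)) := h1
        _ = (pweight w (pre ++ [cx]) + pweight w ((s1 ++ [f.1]) ++ [f.2]))
              + pweight w (f.2 :: r2) := (add_assoc _ _ _).symm
        _ = pweight w ((pre ++ (s1 ++ [f.1])) ++ [f.2]) + pweight w (f.2 :: r2) := by
              rw [hq2]
        _ ≤ pweight w ((r1 ++ [f.1]) ++ [f.2]) + pweight w (f.2 :: r2) :=
              add_le_add_left hprefix_le _
        _ = pweight w R := by rw [← pweight_split, ← hR2]
    rcases List.mem_cons.1 hf2 with hfeq | hf3
    · exact absurd (by rw [hfeq]) hfe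
    · -- f is strictly after e: bound via term 2
      obtain ⟨s1, t1, hst⟩ := mem_edgesOf_iff.1 hf3
      have hmid2 : mid = (m1 ++ e.1 :: s1) ++ f.1 :: (f.2 :: t1) := by
        rw [hm, hst]; simp
      obtain ⟨r1, r2, hrr⟩ := mem_edgesOf_iff.1 hfR
      have hR2 : R = r1 ++ f.1 :: (f.2 :: r2) := hrr
      have hmida : IsPath E f.1 cy (f.1 :: (f.2 :: t1)) :=
        (isPath_split (show IsPath E cx cy ((m1 ++ e.1 :: s1) ++ f.1 :: (f.2 :: t1)) by
          rw [← hmid2]; exact hPmid)).2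
      have hRsplit := isPath_split (show IsPath E x y (r1 ++ f.1 :: (f.2 :: r2)) by
        rw [← hR2]; exact hR)
      obtain ⟨Z, hZ⟩ : ∃ Z, s1 ++ [f.1] = e.2 :: Z := by
        cases hq : s1 ++ [f.1] with
        | nil => simp at hq
        | cons a Z =>
          refine ⟨Z, ?_⟩
          have hh2 : (e.2 :: m2).head? = some a := by
            rw [hst, show s1 ++ f.1 :: f.2 :: t1 = (s1 ++ [f.1]) ++ f.2 :: t1 by simp, hq]
            rfl
          simp only [List.head?_cons, Option.some.injEq] at hh2
          rw [hh2]
      have hein1 : e ∈ edgesOf ((m1 ++ e.1 :: s1) ++ [f.1]) := by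
        apply mem_edgesOf_iff.2
        refine ⟨m1, Z, ?_⟩
        rw [show (m1 ++ e.1 :: s1) ++ [f.1] = m1 ++ e.1 :: (s1 ++ [f.1]) by simp, hZ]
      have henot1 : e ∉ edgesOf (f.1 :: (f.2 :: t1)) := by
        intro hmem
        have hd := List.disjoint_of_nodup_append
          (by rw [← edgesOf_split, ← hmid2]; exact hmidnodup)
        exact hd hein1 hmem
      have henot2 : e ∉ edgesOf (r1 ++ [f.1]) := by
        intro hmem
        apply heR
        rw [hR2, edgesOf_split]
        exact List.mem_append_left _ hmem
      obtain ⟨W, hW, hWw, hWsub⟩ := glue_paths w hRsplit.1 hmida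
      have heW : e ∉ edgesOf W := by
        intro hmem
        rcases hWsub e hmem with h | h
        · exact henot2 h
        · exact henot1 h
      have hPsplita : P = (pre ++ (m1 ++ e.1 :: s1)) ++ f.1 :: ((f.2 :: t1) ++ post) := by
        rw [hdecomp, hmid2]; simp
      have hsuffix_le : pweight w (f.1 :: ((f.2 :: t1) ++ post))
          ≤ pweight w (f.1 :: (f.2 :: r2)) :=
        suffix_shortest (by rw [← hPsplita]; exact hP) (by rw [← hPsplita]; exact hshort)
          hgfin hRsplit.2
      have hlastm : (f.1 :: f.2 :: t1).getLast? = some cy := by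
        have hl2 := hlast
        rw [hmid2, List.getLast?_append_cons] at hl2
        exact hl2
      have hdl : (f.1 :: f.2 :: t1).dropLast ++ [cy] = f.1 :: f.2 :: t1 :=
        List.dropLast_append_getLast? _ hlastm
      have hsw : pweight w (f.1 :: ((f.2 :: t1) ++ post))
          = pweight w (f.1 :: f.2 :: t1) + pweight w (cy :: post) := by
        rw [show f.1 :: ((f.2 :: t1) ++ post) = (f.1 :: f.2 :: t1) ++ post from rfl, ← hdl]
        rw [List.append_assoc, List.singleton_append, pweight_split]
      refine le_trans (min_le_right _ _) (le_trans (min_le_left _ _) ?_)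
      have h1 : dRepl E w x cy e + gdist E w cy y
          ≤ pweight w W + pweight w (cy :: post) :=
        add_le_add (dRepl_le hW heW) (gdist_le hP4)
      rw [hWw] at h1
      calc dRepl E w x cy e + gdist E w cy y
          ≤ (pweight w (r1 ++ [f.1]) + pweight w (f.1 :: f.2 :: t1))
              + pweight w (cy :: post) := h1
        _ = pweight w (r1 ++ [f.1]) + pweight w (f.1 :: ((f.2 :: t1) ++ post)) := by
              rw [hsw, add_assoc]
        _ ≤ pweight w (r1 ++ [f.1]) + pweight w (f.1 :: (f.2 :: r2)) :=
              add_le_add_right hsuffix_le _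
        _ = pweight w R := by rw [← pweight_split, ← hR2]
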